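/- Let m ≥ 3 be an odd integer. Then for every x ∈ 𝔽_{2^m}, Tr((x+1) + (x+1)^{2^{(m+1)/2} − 1} + (x+1)^{2^m − 2^{(m+1)/2} + 1}) = Tr(x) + 1. -/

import Mathlib

lemma trace_frob_pow (m : ℕ) (hm : m ≠ 0) (k : ℕ) (z : GaloisField 2 m) :
    Algebra.trace (ZMod 2) (GaloisField 2 m) (z ^ 2 ^ k) =
      Algebra.trace (ZMod 2) (GaloisField 2 m) z := by
  induction k generalizing z with
  | zero => simp
  | succ n ih =>
    have hfrob : ∀ w : GaloisField 2 m,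
        Algebra.trace (ZMod 2) (GaloisField 2 m) (w ^ 2) =
          Algebra.trace (ZMod 2) (GaloisField 2 m) w := by
      intro w
      let e : GaloisField 2 m ≃ₐ[ZMod 2] GaloisField 2 m :=
        AlgEquiv.ofRingEquiv (f := frobeniusEquiv (GaloisField 2 m) 2) (by
          intro r
          show (algebraMap (ZMod 2) (GaloisField 2 m) r) ^ 2 = _
          rw [← map_pow]
          congr 1
          revert r; decide)
      have := Algebra.trace_eq_of_algEquiv e w
      simpa [e, AlgEquiv.ofRingEquiv, frobeniusEquiv_def, frobenius_def] using this
    rw [pow_succ, pow_mul, hfrob, ih]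

theorem stmt0 (m : ℕ) (hm3 : 3 ≤ m) (hmo : Odd m) (x : GaloisField 2 m) :
    Algebra.trace (ZMod 2) (GaloisField 2 m)
        ((x + 1) + (x + 1) ^ (2 ^ ((m + 1) / 2) - 1) +
          (x + 1) ^ (2 ^ m - 2 ^ ((m + 1) / 2) + 1)) =
      Algebra.trace (ZMod 2) (GaloisField 2 m) x + 1 := by
  obtain ⟨k, hk⟩ : ∃ k, m = 2 * k - 1 ∧ 2 ≤ k := by
    obtain ⟨j, hj⟩ := hmo
    exact ⟨j + 1, by omega, by omega⟩
  obtain ⟨hk1, hk2⟩ := hk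
  have hm0 : m ≠ 0 := by omega
  have hdiv : (m + 1) / 2 = k := by omega
  set y : GaloisField 2 m := x + 1 with hy
  -- key exponent identity
  haveI : Fintype (GaloisField 2 m) := Fintype.ofFinite _
  have hcard : Fintype.card (GaloisField 2 m) = 2 ^ m := by
    have := GaloisField.card 2 m hm0
    simpa [Nat.card_eq_fintype_card] using this
  have hexp : (2 ^ k - 1) * 2 ^ k = (2 ^ m - 2 ^ k + 1) + (2 ^ m - 1) := by
    have hk' : 2 ^ k = 2 * 2 ^ (k - 1) := by
      rw [← pow_succ']; congr 1; omega
    have h1 : 2 ^ m = 2 ^ (k - 1) * (2 * 2 ^ (k - 1)) := by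
      rw [← hk', ← pow_add]; congr 1; omega
    have h4 : (1:ℕ) ≤ 2 ^ (k-1) := Nat.one_le_two_pow
    set t := 2 ^ (k-1) with ht
    rw [h1, hk']
    have e1 : (1:ℕ) ≤ 2 * t := by omega
    have e2 : 2 * t ≤ t * (2 * t) := Nat.le_mul_of_pos_left _ (by omega)
    have e3 : (1:ℕ) ≤ t * (2 * t) := by nlinarith
    zify [e1, e2, e3]
    ring
  have hpow : y ^ (2 ^ m - 2 ^ k + 1) = (y ^ (2 ^ k - 1)) ^ 2 ^ k := by
    rcases eq_or_ne y 0 with h0 | h0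
    · have e1 : 2 ^ m - 2 ^ k + 1 ≠ 0 := by omega
      have e2 : 2 ^ k - 1 ≠ 0 := by
        have : (2:ℕ)^2 ≤ 2^k := Nat.pow_le_pow_right (by norm_num) hk2
        omega
      simp [h0, zero_pow, e1, e2, pow_ne_zero]
    · have hone : y ^ (2 ^ m - 1) = 1 := by
        have := FiniteField.pow_card_sub_one_eq_one y h0
        rwa [hcard] at this
      calc y ^ (2 ^ m - 2 ^ k + 1)
          = y ^ (2 ^ m - 2 ^ k + 1) * y ^ (2 ^ m - 1) := by rw [hone, mul_one]
        _ = y ^ ((2 ^ k - 1) * 2 ^ k) := by rw [← pow_add, hexp]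
        _ = (y ^ (2 ^ k - 1)) ^ 2 ^ k := pow_mul y _ _
  have htr1 : Algebra.trace (ZMod 2) (GaloisField 2 m) (1 : GaloisField 2 m) = 1 := by
    rw [show (1 : GaloisField 2 m) = algebraMap (ZMod 2) (GaloisField 2 m) 1 by simp,
      Algebra.trace_algebraMap, GaloisField.finrank 2 hm0]
    obtain ⟨j, hj⟩ := hmo
    rw [Nat.smul_one_eq_cast, hj]
    push_cast
    rw [show ((2:ZMod 2)) = 0 from rfl]
    ring
  have hTy : Algebra.trace (ZMod 2) (GaloisField 2 m) y =
      Algebra.trace (ZMod 2) (GaloisField 2 m) x + 1 := by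
    rw [hy, map_add, htr1]
  rw [hdiv, hpow, map_add, map_add, trace_frob_pow m hm0 k, hTy,
    add_assoc, CharTwo.add_self_eq_zero, add_zero]
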